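/- With M_k = q·Δ_k/((1+q−(1+p)·q^{k+1})·Δ_{k+1}) for k ≥ 0, one has M_k/(1−M_k) = q·Δ_k/(Δ_{k+2}·(1−q^{k+1})·(1−pq^{k+1})) for every k ≥ 0, and the series ∑_{n=1}^∞ ∏_{k=1}^n (M_k/(1−M_k)) diverges to +∞. -/

import Mathlib

open Filter Finset Real

/-- Infinite q-shifted factorial `(z;q)_∞`. -/
noncomputable def qpInf (z q : ℝ) : ℝ := ∏' k : ℕ, (1 - z * q ^ k)

section aux
variable {z q : ℝ}

lemma fac_pos (hz0 : 0 ≤ z) (hz1 : z < 1) (hq0 : 0 < q) (hq1 : q < 1) (k : ℕ) :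
    0 < 1 - z * q ^ k := by
  have h1 : q ^ k ≤ 1 := pow_le_one₀ hq0.le hq1.le
  nlinarith [pow_pos hq0 k]

lemma summable_log_aux (hz0 : 0 ≤ z) (hz1 : z < 1) (hq0 : 0 < q) (hq1 : q < 1) :
    Summable fun k : ℕ => Real.log (1 - z * q ^ k) := by
  rw [← summable_neg_iff]
  refine Summable.of_nonneg_of_le ?_ ?_ ((summable_geometric_of_lt_one hq0.le hq1).mul_left (z / (1-z)))
  · intro k
    have := fac_pos hz0 hz1 hq0 hq1 k
    have h1 : q ^ k ≤ 1 := pow_le_one₀ hq0.le hq1.le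
    have : Real.log (1 - z * q ^ k) ≤ 0 := Real.log_nonpos (by nlinarith [pow_pos hq0 k]) (by nlinarith [pow_pos hq0 k])
    linarith
  · intro k
    have ht : 0 < 1 - z * q ^ k := fac_pos hz0 hz1 hq0 hq1 k
    have h2 := Real.log_le_sub_one_of_pos (inv_pos.2 ht)
    rw [Real.log_inv] at h2
    have h3 : (1 - z * q ^ k)⁻¹ - 1 = z * q ^ k / (1 - z * q ^ k) := by field_simp; ring
    have h4 : z * q ^ k / (1 - z * q ^ k) ≤ z * q ^ k / (1 - z) := by
      apply div_le_div_of_nonneg_left (by positivity) (by linarith)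
      have h1 : q ^ k ≤ 1 := pow_le_one₀ hq0.le hq1.le
      nlinarith
    have h5 : z * q ^ k / (1 - z) = z / (1 - z) * q ^ k := by ring
    linarith

lemma multipliable_aux (hz0 : 0 ≤ z) (hz1 : z ≤ 1) (hq0 : 0 < q) (hq1 : q < 1) :
    Multipliable fun k : ℕ => 1 - z * q ^ k := by
  rcases eq_or_lt_of_le hz1 with h | h
  · refine ⟨0, ?_⟩
    have h0 : (1 : ℝ) - z * q ^ 0 = 0 := by rw [← h]; ring
    have : ∀ᶠ s : Finset ℕ in atTop, ∏ i ∈ s, (1 - z * q ^ i) = 0 := by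
      filter_upwards [eventually_ge_atTop ({0} : Finset ℕ)] with s hs
      exact Finset.prod_eq_zero (hs (Finset.mem_singleton_self 0)) h0
    exact Tendsto.congr' (this.mono fun s h => h.symm) tendsto_const_nhds
  · exact Real.multipliable_of_summable_log
      (fun n => fac_pos hz0 h hq0 hq1 n) (summable_log_aux hz0 h hq0 hq1)

lemma tendsto_qp (hz0 : 0 ≤ z) (hz1 : z ≤ 1) (hq0 : 0 < q) (hq1 : q < 1) :
    Tendsto (fun N : ℕ => ∏ i ∈ Finset.range N, (1 - z * q ^ i)) atTop (nhds (qpInf z q)) :=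
  (multipliable_aux hz0 hz1 hq0 hq1).hasProd.tendsto_prod_nat

end aux

-- finite product difference bounds
lemma prod_sub_prod_le (a b : ℕ → ℝ) (hb0 : ∀ i, 0 ≤ b i) (hba : ∀ i, b i ≤ a i)
    (ha1 : ∀ i, a i ≤ 1) (N : ℕ) :
    ∏ i ∈ Finset.range N, a i - ∏ i ∈ Finset.range N, b i
      ≤ ∑ i ∈ Finset.range N, (a i - b i) := by
  induction N with
  | zero => simp
  | succ n ih =>
    have ha0 : ∀ i, 0 ≤ a i := fun i => le_trans (hb0 i) (hba i)
    have hPA1 : ∏ i ∈ Finset.range n, a i ≤ 1 :=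
      Finset.prod_le_one (fun i _ => ha0 i) (fun i _ => ha1 i)
    have hPB0 : 0 ≤ ∏ i ∈ Finset.range n, b i := Finset.prod_nonneg fun i _ => hb0 i
    have hPBA : ∏ i ∈ Finset.range n, b i ≤ ∏ i ∈ Finset.range n, a i :=
      Finset.prod_le_prod (fun i _ => hb0 i) (fun i _ => hba i)
    rw [Finset.prod_range_succ, Finset.prod_range_succ, Finset.sum_range_succ]
    nlinarith [hb0 n, hba n, ha1 n, ha0 n]

lemma le_prod_sub_prod (a b : ℕ → ℝ) (hb0 : ∀ i, 0 ≤ b i) (hba : ∀ i, b i ≤ a i)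
    (ha1 : ∀ i, a i ≤ 1) (N : ℕ) :
    (∑ i ∈ Finset.range N, (a i - b i)) * ∏ i ∈ Finset.range N, b i
      ≤ ∏ i ∈ Finset.range N, a i - ∏ i ∈ Finset.range N, b i := by
  induction N with
  | zero => simp
  | succ n ih =>
    have ha0 : ∀ i, 0 ≤ a i := fun i => le_trans (hb0 i) (hba i)
    have hPA1 : ∏ i ∈ Finset.range n, a i ≤ 1 :=
      Finset.prod_le_one (fun i _ => ha0 i) (fun i _ => ha1 i)
    have hPB0 : 0 ≤ ∏ i ∈ Finset.range n, b i := Finset.prod_nonneg fun i _ => hb0 i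
    have hPB1 : ∏ i ∈ Finset.range n, b i ≤ 1 :=
      Finset.prod_le_one (fun i _ => hb0 i) (fun i _ => ha1 i |> le_trans (hba i))
    have hPBA : ∏ i ∈ Finset.range n, b i ≤ ∏ i ∈ Finset.range n, a i :=
      Finset.prod_le_prod (fun i _ => hb0 i) (fun i _ => hba i)
    have hS0 : 0 ≤ ∑ i ∈ Finset.range n, (a i - b i) :=
      Finset.sum_nonneg fun i _ => by linarith [hba i]
    rw [Finset.prod_range_succ, Finset.prod_range_succ, Finset.sum_range_succ]
    have hb1 : b n ≤ 1 := le_trans (hba n) (ha1 n)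
    nlinarith [mul_le_mul_of_nonneg_left ih (ha0 n),
      mul_nonneg (mul_nonneg hS0 hPB0) (sub_nonneg.2 (hba n)),
      mul_nonneg (mul_nonneg hPB0 (sub_nonneg.2 (hba n))) (sub_nonneg.2 hb1)]

section aux2
variable {z q : ℝ}

lemma qp_shift (hz0 : 0 ≤ z) (hz1 : z ≤ 1) (hq0 : 0 < q) (hq1 : q < 1) :
    qpInf z q = (1 - z) * qpInf (z * q) q := by
  have hzq0 : 0 ≤ z * q := mul_nonneg hz0 hq0.le
  have hzq1 : z * q ≤ 1 := mul_le_one₀ hz1 hq0.le hq1.le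
  have h1 : Tendsto (fun N : ℕ => ∏ i ∈ Finset.range (N + 1), (1 - z * q ^ i)) atTop
      (nhds (qpInf z q)) := (tendsto_qp hz0 hz1 hq0 hq1).comp (tendsto_add_atTop_nat 1)
  have h2 : ∀ N : ℕ, ∏ i ∈ Finset.range (N + 1), (1 - z * q ^ i)
      = (∏ i ∈ Finset.range N, (1 - (z * q) * q ^ i)) * (1 - z) := by
    intro N
    rw [Finset.prod_range_succ']
    congr 1
    · exact Finset.prod_congr rfl fun i _ => by ring
    · simp
  have h3 : Tendsto (fun N : ℕ => (∏ i ∈ Finset.range N, (1 - (z * q) * q ^ i)) * (1 - z))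
      atTop (nhds (qpInf (z * q) q * (1 - z))) :=
    (tendsto_qp hzq0 hzq1 hq0 hq1).mul_const _
  have := tendsto_nhds_unique ((tendsto_congr h2).mp h1) h3
  rw [this]; ring

lemma qp_le_one (hz0 : 0 ≤ z) (hz1 : z ≤ 1) (hq0 : 0 < q) (hq1 : q < 1) :
    qpInf z q ≤ 1 := by
  refine le_of_tendsto' (tendsto_qp hz0 hz1 hq0 hq1) fun N => ?_
  refine Finset.prod_le_one (fun i _ => ?_) (fun i _ => ?_)
  · have h1 : q ^ i ≤ 1 := pow_le_one₀ hq0.le hq1.le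
    nlinarith [pow_pos hq0 i]
  · nlinarith [pow_pos hq0 i, mul_nonneg hz0 (pow_pos hq0 i).le]

lemma qp_ge (hz0 : 0 ≤ z) (hz1 : z ≤ 1) (hq0 : 0 < q) (hq1 : q < 1) :
    1 - z / (1 - q) ≤ qpInf z q := by
  refine ge_of_tendsto' (tendsto_qp hz0 hz1 hq0 hq1) fun N => ?_
  have key := prod_sub_prod_le (fun _ => 1) (fun i => 1 - z * q ^ i)
    (fun i => by show (0:ℝ) ≤ 1 - z * q ^ i
                 have h1 : q ^ i ≤ 1 := pow_le_one₀ hq0.le hq1.le; nlinarith [pow_pos hq0 i])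
    (fun i => by show 1 - z * q ^ i ≤ (1:ℝ)
                 nlinarith [mul_nonneg hz0 (pow_pos hq0 i).le])
    (fun i => le_refl 1) N
  simp only [Finset.prod_const_one] at key
  have h2 : ∑ i ∈ Finset.range N, ((1:ℝ) - (1 - z * q ^ i)) = z * ∑ i ∈ Finset.range N, q ^ i := by
    rw [Finset.mul_sum]; exact Finset.sum_congr rfl fun i _ => by ring
  have h3 : ∑ i ∈ Finset.range N, q ^ i ≤ 1 / (1 - q) := by
    have := (summable_geometric_of_lt_one hq0.le hq1)
    have h4 := Summable.sum_le_tsum (Finset.range N) (fun i _ => (pow_nonneg hq0.le i)) this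
    rwa [tsum_geometric_of_lt_one hq0.le hq1, inv_eq_one_div] at h4
  have h5 : z * ∑ i ∈ Finset.range N, q ^ i ≤ z / (1 - q) := by
    calc z * ∑ i ∈ Finset.range N, q ^ i ≤ z * (1 / (1 - q)) :=
          mul_le_mul_of_nonneg_left h3 hz0
      _ = z / (1 - q) := by ring
  linarith

lemma qp_mono {z' : ℝ} (hz0 : 0 ≤ z) (hzz' : z ≤ z') (hz'1 : z' ≤ 1) (hq0 : 0 < q) (hq1 : q < 1) :
    qpInf z' q ≤ qpInf z q := by
  refine le_of_tendsto_of_tendsto' (tendsto_qp (le_trans hz0 hzz') hz'1 hq0 hq1)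
    (tendsto_qp hz0 (le_trans hzz' hz'1) hq0 hq1) fun N => ?_
  refine Finset.prod_le_prod (fun i _ => ?_) (fun i _ => ?_)
  · have h1 : q ^ i ≤ 1 := pow_le_one₀ hq0.le hq1.le
    nlinarith [pow_pos hq0 i, mul_nonneg (le_trans hz0 hzz') (pow_pos hq0 i).le]
  · nlinarith [pow_pos hq0 i]

lemma qp_shift_iter (hz0 : 0 ≤ z) (hz1 : z ≤ 1) (hq0 : 0 < q) (hq1 : q < 1) (m : ℕ) :
    qpInf z q = (∏ i ∈ Finset.range m, (1 - z * q ^ i)) * qpInf (z * q ^ m) q := by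
  induction m with
  | zero => simp
  | succ n ih =>
    have hz0' : 0 ≤ z * q ^ n := mul_nonneg hz0 (pow_pos hq0 n).le
    have hz1' : z * q ^ n ≤ 1 :=
      le_trans (mul_le_one₀ hz1 (pow_pos hq0 n).le (pow_le_one₀ hq0.le hq1.le)) le_rfl
    have hs := qp_shift hz0' hz1' hq0 hq1
    rw [ih, hs, Finset.prod_range_succ]
    have : z * q ^ n * q = z * q ^ (n + 1) := by ring
    rw [this]; ring

lemma qp_pos (hz0 : 0 ≤ z) (hz1 : z < 1) (hq0 : 0 < q) (hq1 : q < 1) :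
    0 < qpInf z q := by
  obtain ⟨m, hm⟩ := exists_pow_lt_of_lt_one (by linarith : (0:ℝ) < 1 - q) hq1
  rw [qp_shift_iter hz0 hz1.le hq0 hq1 m]
  have htail : 0 < qpInf (z * q ^ m) q := by
    have h1 : z * q ^ m ≤ q ^ m := by
      nlinarith [pow_pos hq0 m]
    have h2 := qp_ge (mul_nonneg hz0 (pow_pos hq0 m).le)
      (le_trans h1 (pow_le_one₀ hq0.le hq1.le)) hq0 hq1
    have h3 : z * q ^ m / (1 - q) < 1 := by
      rw [div_lt_one (by linarith)]
      linarith
    linarith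
  exact mul_pos (Finset.prod_pos fun i _ => fac_pos hz0 hz1 hq0 hq1 i) htail

end aux2
/-- `Δ_n = (pq^n;q)_∞ − (q^n;q)_∞`. -/
noncomputable def Δ (p q : ℝ) (n : ℕ) : ℝ := qpInf (p * q ^ n) q - qpInf (q ^ n) q

/-- The maximal parameter sequence `M_k`. -/
noncomputable def Mseq (p q : ℝ) (k : ℕ) : ℝ :=
  q * Δ p q k / ((1 + q - (1 + p) * q ^ (k + 1)) * Δ p q (k + 1))

section delta
variable {p q : ℝ} (hp0 : 0 ≤ p) (hp1 : p < 1) (hq0 : 0 < q) (hq1 : q < 1)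

include hp0 hp1 hq0 hq1

lemma hpqn (n : ℕ) : 0 ≤ p * q ^ n ∧ p * q ^ n < 1 := by
  constructor
  · positivity
  · have h1 : q ^ n ≤ 1 := pow_le_one₀ hq0.le hq1.le
    nlinarith [pow_pos hq0 n]

lemma Arec (n : ℕ) : qpInf (p * q ^ n) q = (1 - p * q ^ n) * qpInf (p * q ^ (n + 1)) q := by
  have h := qp_shift (hpqn hp0 hp1 hq0 hq1 n).1 (hpqn hp0 hp1 hq0 hq1 n).2.le hq0 hq1
  rw [h, show p * q ^ n * q = p * q ^ (n + 1) by ring]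

lemma Brec (n : ℕ) : qpInf (q ^ n) q = (1 - q ^ n) * qpInf (q ^ (n + 1)) q := by
  have h := qp_shift (pow_nonneg hq0.le n) (pow_le_one₀ hq0.le hq1.le) hq0 hq1
  rw [h, show q ^ n * q = q ^ (n + 1) by ring]

lemma BleA (n : ℕ) : qpInf (q ^ n) q ≤ qpInf (p * q ^ n) q := by
  refine qp_mono (hpqn hp0 hp1 hq0 hq1 n).1 ?_ (pow_le_one₀ hq0.le hq1.le) hq0 hq1
  nlinarith [pow_pos hq0 n]

lemma Bpos (n : ℕ) (hn : 1 ≤ n) : 0 < qpInf (q ^ n) q := by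
  refine qp_pos (pow_nonneg hq0.le n) ?_ hq0 hq1
  calc q ^ n ≤ q ^ 1 := pow_le_pow_of_le_one hq0.le hq1.le hn
    _ = q := pow_one q
    _ < 1 := hq1

lemma Δpos (n : ℕ) : 0 < Δ p q n := by
  have hA := Arec hp0 hp1 hq0 hq1 n
  have hB := Brec hp0 hp1 hq0 hq1 n
  have hBA := BleA hp0 hp1 hq0 hq1 (n + 1)
  have hBp := Bpos hp0 hp1 hq0 hq1 (n + 1) (Nat.le_add_left 1 n)
  have h1 : p * q ^ n < q ^ n := by nlinarith [pow_pos hq0 n]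
  have h2 : 0 ≤ 1 - p * q ^ n := by linarith [(hpqn hp0 hp1 hq0 hq1 n).2]
  rw [Δ, hA, hB]
  nlinarith [mul_le_mul_of_nonneg_left hBA h2]

lemma Krec (k : ℕ) : (1 + q - (1 + p) * q ^ (k + 1)) * Δ p q (k + 1) - q * Δ p q k
    = (1 - q ^ (k + 1)) * (1 - p * q ^ (k + 1)) * Δ p q (k + 2) := by
  have hA0 := Arec hp0 hp1 hq0 hq1 k
  have hB0 := Brec hp0 hp1 hq0 hq1 k
  have hA1 := Arec hp0 hp1 hq0 hq1 (k + 1)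
  have hB1 := Brec hp0 hp1 hq0 hq1 (k + 1)
  simp only [Δ]
  rw [hA0, hB0, hA1, hB1]
  ring

lemma Δub (n : ℕ) : Δ p q n ≤ (1 - p) * q ^ n / (1 - q) := by
  have hT : Tendsto (fun N : ℕ => ∏ i ∈ Finset.range N, (1 - p * q ^ n * q ^ i)
      - ∏ i ∈ Finset.range N, (1 - q ^ n * q ^ i)) atTop (nhds (Δ p q n)) :=
    ((tendsto_qp (hpqn hp0 hp1 hq0 hq1 n).1 (hpqn hp0 hp1 hq0 hq1 n).2.le hq0 hq1).sub
      (tendsto_qp (pow_nonneg hq0.le n) (pow_le_one₀ hq0.le hq1.le) hq0 hq1))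
  refine le_of_tendsto' hT fun N => ?_
  have key := prod_sub_prod_le (fun i => 1 - p * q ^ n * q ^ i) (fun i => 1 - q ^ n * q ^ i)
    (fun i => by
      show (0:ℝ) ≤ 1 - q ^ n * q ^ i
      have : q ^ n * q ^ i ≤ 1 := by
        rw [← pow_add]; exact pow_le_one₀ hq0.le hq1.le
      linarith)
    (fun i => by
      show 1 - q ^ n * q ^ i ≤ 1 - p * q ^ n * q ^ i
      nlinarith [mul_pos (pow_pos hq0 n) (pow_pos hq0 i)])
    (fun i => by
      show 1 - p * q ^ n * q ^ i ≤ (1:ℝ)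
      nlinarith [mul_nonneg (mul_nonneg hp0 (pow_pos hq0 n).le) (pow_pos hq0 i).le]) N
  have h2 : ∑ i ∈ Finset.range N, ((1 - p * q ^ n * q ^ i) - (1 - q ^ n * q ^ i))
      = (1 - p) * q ^ n * ∑ i ∈ Finset.range N, q ^ i := by
    rw [Finset.mul_sum]; exact Finset.sum_congr rfl fun i _ => by ring
  have h3 : ∑ i ∈ Finset.range N, q ^ i ≤ 1 / (1 - q) := by
    have h4 := Summable.sum_le_tsum (Finset.range N) (fun i _ => (pow_nonneg hq0.le i))
      (summable_geometric_of_lt_one hq0.le hq1)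
    rwa [tsum_geometric_of_lt_one hq0.le hq1, inv_eq_one_div] at h4
  have h5 : (1 - p) * q ^ n * ∑ i ∈ Finset.range N, q ^ i ≤ (1 - p) * q ^ n / (1 - q) := by
    calc (1 - p) * q ^ n * ∑ i ∈ Finset.range N, q ^ i
        ≤ (1 - p) * q ^ n * (1 / (1 - q)) := by
          apply mul_le_mul_of_nonneg_left h3 (by nlinarith [pow_pos hq0 n])
      _ = (1 - p) * q ^ n / (1 - q) := by ring
  linarith [key, h2 ▸ key]

lemma Δlb (n : ℕ) : (1 - p) * q ^ n / (1 - q) * qpInf (q ^ n) q ≤ Δ p q n := by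
  have hT : Tendsto (fun N : ℕ => ∏ i ∈ Finset.range N, (1 - p * q ^ n * q ^ i)
      - ∏ i ∈ Finset.range N, (1 - q ^ n * q ^ i)) atTop (nhds (Δ p q n)) :=
    ((tendsto_qp (hpqn hp0 hp1 hq0 hq1 n).1 (hpqn hp0 hp1 hq0 hq1 n).2.le hq0 hq1).sub
      (tendsto_qp (pow_nonneg hq0.le n) (pow_le_one₀ hq0.le hq1.le) hq0 hq1))
  have hS : Tendsto (fun N : ℕ => ((1 - p) * q ^ n * ∑ i ∈ Finset.range N, q ^ i)
      * ∏ i ∈ Finset.range N, (1 - q ^ n * q ^ i)) atTop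
      (nhds ((1 - p) * q ^ n * (1 - q)⁻¹ * qpInf (q ^ n) q)) := by
    exact (((hasSum_geometric_of_lt_one hq0.le hq1).tendsto_sum_nat).const_mul
      ((1 - p) * q ^ n)).mul
      (tendsto_qp (pow_nonneg hq0.le n) (pow_le_one₀ hq0.le hq1.le) hq0 hq1)
  have heq : (1 - p) * q ^ n * (1 - q)⁻¹ * qpInf (q ^ n) q
      = (1 - p) * q ^ n / (1 - q) * qpInf (q ^ n) q := by ring
  rw [← heq]
  refine le_of_tendsto_of_tendsto' hS hT fun N => ?_
  have key := le_prod_sub_prod (fun i => 1 - p * q ^ n * q ^ i) (fun i => 1 - q ^ n * q ^ i)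
    (fun i => by
      show (0:ℝ) ≤ 1 - q ^ n * q ^ i
      have : q ^ n * q ^ i ≤ 1 := by
        rw [← pow_add]; exact pow_le_one₀ hq0.le hq1.le
      linarith)
    (fun i => by
      show 1 - q ^ n * q ^ i ≤ 1 - p * q ^ n * q ^ i
      nlinarith [mul_pos (pow_pos hq0 n) (pow_pos hq0 i)])
    (fun i => by
      show 1 - p * q ^ n * q ^ i ≤ (1:ℝ)
      nlinarith [mul_nonneg (mul_nonneg hp0 (pow_pos hq0 n).le) (pow_pos hq0 i).le]) N
  have h2 : ∑ i ∈ Finset.range N, ((1 - p * q ^ n * q ^ i) - (1 - q ^ n * q ^ i))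
      = (1 - p) * q ^ n * ∑ i ∈ Finset.range N, q ^ i := by
    rw [Finset.mul_sum]; exact Finset.sum_congr rfl fun i _ => by ring
  rw [h2] at key
  exact key

end delta
theorem stmt_18 (p q : ℝ) (hp0 : 0 ≤ p) (hp1 : p < 1) (hq0 : 0 < q) (hq1 : q < 1) :
    (∀ k : ℕ, Mseq p q k / (1 - Mseq p q k)
        = q * Δ p q k / (Δ p q (k + 2) * (1 - q ^ (k + 1)) * (1 - p * q ^ (k + 1)))) ∧
    Filter.Tendsto
      (fun N : ℕ => ∑ n ∈ Finset.Icc 1 N,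
        ∏ k ∈ Finset.Icc 1 n, (Mseq p q k / (1 - Mseq p q k)))
      Filter.atTop Filter.atTop := by
  have hq1' : (0:ℝ) < 1 - q := by linarith
  have hqk1 : ∀ k : ℕ, q ^ (k + 1) ≤ q := fun k => by
    calc q ^ (k + 1) ≤ q ^ 1 := pow_le_pow_of_le_one hq0.le hq1.le (Nat.le_add_left 1 k)
      _ = q := pow_one q
  have hD : ∀ k : ℕ, 0 < 1 + q - (1 + p) * q ^ (k + 1) := fun k => by
    nlinarith [hqk1 k, pow_pos hq0 (k + 1)]
  have hE1 : ∀ k : ℕ, 0 < 1 - q ^ (k + 1) := fun k => by nlinarith [hqk1 k]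
  have hE2 : ∀ k : ℕ, 0 < 1 - p * q ^ (k + 1) := fun k => by
    linarith [(hpqn hp0 hp1 hq0 hq1 (k + 1)).2]
  have hΔ : ∀ n : ℕ, 0 < Δ p q n := Δpos hp0 hp1 hq0 hq1
  -- Part 1
  have part1 : ∀ k : ℕ, Mseq p q k / (1 - Mseq p q k)
      = q * Δ p q k / (Δ p q (k + 2) * (1 - q ^ (k + 1)) * (1 - p * q ^ (k + 1))) := by
    intro k
    have hDne : (1 + q - (1 + p) * q ^ (k + 1)) * Δ p q (k + 1) ≠ 0 :=
      (mul_pos (hD k) (hΔ (k + 1))).ne'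
    have h1m : 1 - Mseq p q k
        = (1 - q ^ (k + 1)) * (1 - p * q ^ (k + 1)) * Δ p q (k + 2)
          / ((1 + q - (1 + p) * q ^ (k + 1)) * Δ p q (k + 1)) := by
      rw [Mseq, ← Krec hp0 hp1 hq0 hq1 k, sub_div, div_self hDne]
    rw [h1m, Mseq, div_div_div_cancel_right₀]
    · rw [show (1 - q ^ (k + 1)) * (1 - p * q ^ (k + 1)) * Δ p q (k + 2)
        = Δ p q (k + 2) * (1 - q ^ (k + 1)) * (1 - p * q ^ (k + 1)) from by ring]
    · exact hDne
  refine ⟨part1, ?_⟩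
  -- Part 2
  set R : ℕ → ℝ := fun k =>
    q * Δ p q k / (Δ p q (k + 2) * (1 - q ^ (k + 1)) * (1 - p * q ^ (k + 1))) with hR
  have hRpos : ∀ k, 0 < R k := fun k =>
    div_pos (mul_pos hq0 (hΔ k)) (mul_pos (mul_pos (hΔ (k + 2)) (hE1 k)) (hE2 k))
  have hRlow : ∀ k : ℕ, 1 ≤ k → qpInf (q ^ k) q / q ≤ R k := by
    intro k hk
    have hBk : 0 < qpInf (q ^ k) q := Bpos hp0 hp1 hq0 hq1 k hk
    have hden : 0 < Δ p q (k + 2) * (1 - q ^ (k + 1)) * (1 - p * q ^ (k + 1)) :=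
      mul_pos (mul_pos (hΔ (k + 2)) (hE1 k)) (hE2 k)
    rw [div_le_div_iff₀ hq0 hden]
    have hE1' : 1 - q ^ (k + 1) ≤ 1 := by nlinarith [pow_pos hq0 (k + 1)]
    have hE2' : 1 - p * q ^ (k + 1) ≤ 1 := by
      nlinarith [mul_nonneg hp0 (pow_pos hq0 (k + 1)).le]
    have step1 : qpInf (q ^ k) q * (Δ p q (k + 2) * (1 - q ^ (k + 1)) * (1 - p * q ^ (k + 1)))
        ≤ qpInf (q ^ k) q * Δ p q (k + 2) := by
      nlinarith [mul_nonneg hBk.le (hΔ (k + 2)).le, hE1 k, hE2 k,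
        mul_pos (hE1 k) (hE2 k), mul_pos (mul_pos hBk (hΔ (k + 2))) (hE1 k)]
    have step2 : qpInf (q ^ k) q * Δ p q (k + 2)
        ≤ qpInf (q ^ k) q * ((1 - p) * q ^ (k + 2) / (1 - q)) :=
      mul_le_mul_of_nonneg_left (Δub hp0 hp1 hq0 hq1 (k + 2)) hBk.le
    have step3 : qpInf (q ^ k) q * ((1 - p) * q ^ (k + 2) / (1 - q))
        = ((1 - p) * q ^ k / (1 - q) * qpInf (q ^ k) q) * (q * q) := by
      rw [show q ^ (k + 2) = q ^ k * (q * q) from by ring]; ring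
    have step4 : ((1 - p) * q ^ k / (1 - q) * qpInf (q ^ k) q) * (q * q)
        ≤ (q * Δ p q k) * q := by
      have h := Δlb hp0 hp1 hq0 hq1 k
      nlinarith [mul_pos hq0 hq0]
    calc qpInf (q ^ k) q * (Δ p q (k + 2) * (1 - q ^ (k + 1)) * (1 - p * q ^ (k + 1)))
        ≤ qpInf (q ^ k) q * Δ p q (k + 2) := step1
      _ ≤ qpInf (q ^ k) q * ((1 - p) * q ^ (k + 2) / (1 - q)) := step2
      _ = ((1 - p) * q ^ k / (1 - q) * qpInf (q ^ k) q) * (q * q) := step3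
      _ ≤ (q * Δ p q k) * q := step4
      _ = q * Δ p q k * q := by ring
  -- choose K
  obtain ⟨K0, hK0⟩ := exists_pow_lt_of_lt_one (by positivity : (0:ℝ) < (1 - q) ^ 2 / 2) hq1
  set K : ℕ := max K0 1 with hKdef
  have hK1 : 1 ≤ K := le_max_right _ _
  set c : ℝ := (1 + q) / (2 * q) with hc
  have hc1 : 1 < c := by
    rw [hc, lt_div_iff₀ (by linarith)]
    linarith
  have hclow : ∀ k : ℕ, K ≤ k → c ≤ R k := by
    intro k hkK
    have hk1 : 1 ≤ k := le_trans hK1 hkK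
    have hqk : q ^ k ≤ q ^ K0 :=
      pow_le_pow_of_le_one hq0.le hq1.le (le_trans (le_max_left K0 1) hkK)
    have hBk : (1 + q) / 2 ≤ qpInf (q ^ k) q := by
      have h1 := qp_ge (pow_nonneg hq0.le k) (pow_le_one₀ hq0.le hq1.le) hq0 hq1
      have h2 : q ^ k / (1 - q) ≤ (1 - q) / 2 := by
        rw [div_le_div_iff₀ hq1' (by norm_num : (0:ℝ) < 2)]
        nlinarith
      linarith
    calc c = ((1 + q) / 2) / q := by rw [hc]; ring
      _ ≤ qpInf (q ^ k) q / q := by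
          exact div_le_div_of_nonneg_right hBk hq0.le |>.trans_eq rfl
      _ ≤ R k := hRlow k hk1
  -- partial products
  set P : ℕ → ℝ := fun n => ∏ k ∈ Finset.Icc 1 n, R k with hP
  have hPpos : ∀ n, 0 < P n := fun n => Finset.prod_pos fun i _ => hRpos i
  have hkey : ∀ n : ℕ, K ≤ n → P K * c ^ (n - K) ≤ P n := by
    intro n hn
    have hsplit : P K * ∏ k ∈ Finset.Ioc K n, R k = P n := by
      rw [hP]
      simp only [show ∀ m : ℕ, Finset.Icc 1 m = Finset.Ioc 0 m from fun m => rfl]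
      exact Finset.prod_Ioc_consecutive R (Nat.zero_le K) hn
    have hprod : c ^ (n - K) ≤ ∏ k ∈ Finset.Ioc K n, R k := by
      have h1 : ∏ k ∈ Finset.Ioc K n, c ≤ ∏ k ∈ Finset.Ioc K n, R k :=
        Finset.prod_le_prod (fun i _ => by positivity)
          (fun i hi => hclow i (Finset.mem_Ioc.1 hi).1.le)
      rwa [Finset.prod_const, Nat.card_Ioc] at h1
    calc P K * c ^ (n - K) ≤ P K * ∏ k ∈ Finset.Ioc K n, R k :=
          mul_le_mul_of_nonneg_left hprod (hPpos K).le
      _ = P n := hsplit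
  have hlow : Tendsto (fun n : ℕ => P K * c ^ (n - K)) atTop atTop := by
    apply Tendsto.const_mul_atTop (hPpos K)
    exact (tendsto_pow_atTop_atTop_of_one_lt hc1).comp (tendsto_sub_atTop_nat K)
  have hPtend : Tendsto P atTop atTop :=
    tendsto_atTop_mono' atTop (eventually_atTop.2 ⟨K, hkey⟩) hlow
  have hgoal : Tendsto (fun N : ℕ => ∑ n ∈ Finset.Icc 1 N, P n) atTop atTop := by
    refine tendsto_atTop_mono' atTop (eventually_atTop.2 ⟨1, fun N hN => ?_⟩) hPtend
    exact Finset.single_le_sum (f := P) (fun i _ => (hPpos i).le)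
      (Finset.mem_Icc.2 ⟨hN, le_rfl⟩)
  have hfun : (fun N : ℕ => ∑ n ∈ Finset.Icc 1 N,
      ∏ k ∈ Finset.Icc 1 n, (Mseq p q k / (1 - Mseq p q k)))
      = fun N : ℕ => ∑ n ∈ Finset.Icc 1 N, P n := by
    funext N
    refine Finset.sum_congr rfl fun n _ => ?_
    exact Finset.prod_congr rfl fun k _ => part1 k
  rw [hfun]
  exact hgoal
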